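/- The operator E = Σ_{k=1}^p (z_{2k-1} ∂_{z̄_{2k}} - z_{2k} ∂_{z̄_{2k-1}}) satisfies [E, ∂_z] = -∂_z†^J, [E, ∂_z†] = 0, [E, ∂_z^J] = ∂_z† and [E, ∂_z†^J] = 0; consequently, if F is annihilated by all four operators ∂_z, ∂_z†, ∂_z^J, ∂_z†^J, then so is EF. -/

import Mathlib

open MvPolynomial TensorProduct

/-- Variables: `Sum.inl j` is `z_{j+1}`, `Sum.inr j` is `z̄_{j+1}` (0-indexed). -/
abbrev HVar (p : ℕ) := Fin (2*p) ⊕ Fin (2*p)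

abbrev HPol (p : ℕ) := MvPolynomial (HVar p) ℂ

def idx0 {p : ℕ} (k : Fin p) : Fin (2*p) := ⟨2*k.1, by have := k.2; omega⟩
def idx1 {p : ℕ} (k : Fin p) : Fin (2*p) := ⟨2*k.1+1, by have := k.2; omega⟩

variable (p : ℕ) (A : Type*) [Ring A] [Algebra ℂ A]

/-- The (Wirtinger) partial derivative `∂_v`, acting on `A`-valued polynomials. -/
noncomputable def Dop (v : HVar p) : Module.End ℂ (HPol p ⊗[ℂ] A) :=
  LinearMap.rTensor A (MvPolynomial.pderiv v).toLinearMap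

/-- Left Clifford multiplication by `a : A` on `A`-valued polynomials. -/
noncomputable def mulF (a : A) : Module.End ℂ (HPol p ⊗[ℂ] A) :=
  LinearMap.lTensor (HPol p) (LinearMap.mulLeft ℂ a)

/-- Multiplication by the scalar polynomial `q` on `A`-valued polynomials. -/
noncomputable def mulP (q : HPol p) : Module.End ℂ (HPol p ⊗[ℂ] A) :=
  LinearMap.rTensor A (LinearMap.mulLeft ℂ q)

/-- The hermitian Dirac operator `∂_z = Σ_k f_k† ∂_{z_k}`. -/
noncomputable def dz (fd : Fin (2*p) → A) : Module.End ℂ (HPol p ⊗[ℂ] A) :=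
  ∑ k : Fin (2*p), mulF p A (fd k) * Dop p A (Sum.inl k)

/-- The hermitian Dirac operator `∂_z† = Σ_k f_k ∂_{z̄_k}`. -/
noncomputable def dzd (f : Fin (2*p) → A) : Module.End ℂ (HPol p ⊗[ℂ] A) :=
  ∑ k : Fin (2*p), mulF p A (f k) * Dop p A (Sum.inr k)

/-- The rotated Dirac operator `∂_z^J = Σ_j (∂_{z_{2j}} f_{2j-1} - ∂_{z_{2j-1}} f_{2j})`. -/
noncomputable def dzJ (f : Fin (2*p) → A) : Module.End ℂ (HPol p ⊗[ℂ] A) :=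
  ∑ j : Fin p, (mulF p A (f (idx0 j)) * Dop p A (Sum.inl (idx1 j))
    - mulF p A (f (idx1 j)) * Dop p A (Sum.inl (idx0 j)))

/-- The rotated Dirac operator `∂_z†^J = Σ_j (∂_{z̄_{2j}} f†_{2j-1} - ∂_{z̄_{2j-1}} f†_{2j})`. -/
noncomputable def dzdJ (fd : Fin (2*p) → A) : Module.End ℂ (HPol p ⊗[ℂ] A) :=
  ∑ j : Fin p, (mulF p A (fd (idx0 j)) * Dop p A (Sum.inr (idx1 j))
    - mulF p A (fd (idx1 j)) * Dop p A (Sum.inr (idx0 j)))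

/-- The scalar operator `E = Σ_j (z_{2j-1} ∂_{z̄_{2j}} - z_{2j} ∂_{z̄_{2j-1}})`. -/
noncomputable def Eop : Module.End ℂ (HPol p ⊗[ℂ] A) :=
  ∑ j : Fin p, (mulP p A (X (Sum.inl (idx0 j))) * Dop p A (Sum.inr (idx1 j))
    - mulP p A (X (Sum.inl (idx1 j))) * Dop p A (Sum.inr (idx0 j)))

section Aux

theorem pderiv_comm' {σ R : Type*} [CommSemiring R] (i j : σ) (f : MvPolynomial σ R) :
    pderiv i (pderiv j f) = pderiv j (pderiv i f) := by
  classical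
  induction f using MvPolynomial.induction_on with
  | C a => simp
  | add p q hp hq => simp [hp, hq]
  | mul_X q n h =>
    simp only [pderiv_mul, pderiv_X, Pi.single_apply, map_add, h]
    split_ifs <;> simp <;> ring

theorem pderiv_comp_mulLeft_X {σ R : Type*} [CommSemiring R] [DecidableEq σ] (i j : σ) :
    (pderiv i).toLinearMap ∘ₗ LinearMap.mulLeft R (MvPolynomial.X j : MvPolynomial σ R)
    = LinearMap.mulLeft R (MvPolynomial.X j) ∘ₗ (pderiv i).toLinearMap
      + (if i = j then (1 : Module.End R (MvPolynomial σ R)) else 0) := by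
  refine LinearMap.ext fun f => ?_
  simp only [LinearMap.comp_apply, LinearMap.mulLeft_apply,
    LinearMap.add_apply, pderiv_mul, pderiv_X]
  split_ifs with hij <;> simp [Pi.single_apply, hij, mul_comm, add_comm]

theorem pair_sum {p : ℕ} {M : Type*} [AddCommMonoid M] (g : Fin (2*p) → M) :
    ∑ k, g k = ∑ j : Fin p, (g (idx0 j) + g (idx1 j)) := by
  rw [← Fintype.sum_equiv (finProdFinEquiv.trans (finCongr (by ring : p*2 = 2*p)))
    (fun x => g ((finProdFinEquiv.trans (finCongr (by ring : p*2 = 2*p))) x)) g (fun _ => rfl),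
    Fintype.sum_prod_type]
  refine Finset.sum_congr rfl fun j _ => ?_
  rw [Fin.sum_univ_two]
  congr 1 <;> (congr 1; apply Fin.ext; simp [finCongr, finProdFinEquiv, idx0, idx1]) <;> omega

@[simp] theorem idx0_inj {p : ℕ} {j k : Fin p} : idx0 j = idx0 k ↔ j = k := by
  simp only [idx0, Fin.mk.injEq, Fin.ext_iff]; omega
@[simp] theorem idx1_inj {p : ℕ} {j k : Fin p} : idx1 j = idx1 k ↔ j = k := by
  simp only [idx1, Fin.mk.injEq, Fin.ext_iff]; omega
@[simp] theorem idx0_ne_idx1 {p : ℕ} {j k : Fin p} : idx0 j ≠ idx1 k := by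
  simp [idx0, idx1, Fin.ext_iff]; omega
@[simp] theorem idx1_ne_idx0 {p : ℕ} {j k : Fin p} : idx1 j ≠ idx0 k := by
  simp [idx0, idx1, Fin.ext_iff]; omega

theorem comm_helper {R : Type*} [Ring R] (P Db F Dd E : R)
    (hFP : F*P = P*F) (hFb : F*Db = Db*F) (hFd : F*Dd = Dd*F)
    (hbd : Db*Dd = Dd*Db) (hdP : Dd*P = P*Dd + E)
    (hEF : E*F = F*E) :
    (P*Db)*(F*Dd) - (F*Dd)*(P*Db) = -(E*(F*Db)) := by
  have h1 : (P*Db)*(F*Dd) = P*F*(Db*Dd) := by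
    rw [mul_assoc P Db (F*Dd), ← mul_assoc Db F Dd, ← hFb, mul_assoc F Db Dd,
      ← mul_assoc P F (Db*Dd)]
  have h2 : (F*Dd)*(P*Db) = P*F*(Db*Dd) + E*(F*Db) := by
    calc (F*Dd)*(P*Db) = F*((Dd*P)*Db) := by rw [mul_assoc, ← mul_assoc Dd P Db]
    _ = F*(P*(Db*Dd)) + F*(E*Db) := by rw [hdP, add_mul, mul_assoc P Dd Db, ← hbd, mul_add]
    _ = P*F*(Db*Dd) + E*(F*Db) := by
        rw [← mul_assoc F P, hFP, ← mul_assoc F E Db, ← hEF, mul_assoc E F Db]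
  rw [h1, h2]; abel

theorem sum_commutator {R : Type*} [Ring R] {ι κ : Type*} [Fintype ι] [Fintype κ]
    (a : ι → R) (b : κ → R) :
    (∑ i, a i) * (∑ j, b j) - (∑ j, b j) * (∑ i, a i)
      = ∑ i, ∑ j, (a i * b j - b j * a i) := by
  simp only [Finset.sum_mul, Finset.mul_sum, Finset.sum_sub_distrib]
  rw [Finset.sum_comm]

end Aux

section Aux2
variable (p : ℕ) (A : Type*) [Ring A] [Algebra ℂ A]

theorem mulF_comm_rT (a : A) (g : HPol p →ₗ[ℂ] HPol p) :
    mulF p A a * LinearMap.rTensor A g = LinearMap.rTensor A g * mulF p A a := by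
  unfold mulF
  rw [Module.End.mul_eq_comp, Module.End.mul_eq_comp, LinearMap.lTensor_comp_rTensor,
    LinearMap.rTensor_comp_lTensor]

theorem mulF_comm_Dop (a : A) (v : HVar p) :
    mulF p A a * Dop p A v = Dop p A v * mulF p A a := mulF_comm_rT p A a _

theorem mulF_comm_mulP (a : A) (q : HPol p) :
    mulF p A a * mulP p A q = mulP p A q * mulF p A a := mulF_comm_rT p A a _

theorem Dop_comm (v w : HVar p) :
    Dop p A v * Dop p A w = Dop p A w * Dop p A v := by
  unfold Dop
  rw [Module.End.mul_eq_comp, Module.End.mul_eq_comp, ← LinearMap.rTensor_comp,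
    ← LinearMap.rTensor_comp]
  exact congrArg (LinearMap.rTensor A) (LinearMap.ext fun f => pderiv_comm' v w f)

theorem Dop_mulP_X (v w : HVar p) :
    Dop p A v * mulP p A (MvPolynomial.X w)
      = mulP p A (MvPolynomial.X w) * Dop p A v
        + (if v = w then (1 : Module.End ℂ (HPol p ⊗[ℂ] A)) else 0) := by
  classical
  unfold Dop mulP
  rw [Module.End.mul_eq_comp, Module.End.mul_eq_comp, ← LinearMap.rTensor_comp,
    ← LinearMap.rTensor_comp, pderiv_comp_mulLeft_X, LinearMap.rTensor_add]
  congr 1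
  split_ifs
  · exact LinearMap.rTensor_id A _
  · exact LinearMap.rTensor_zero A

theorem key (xw b : HVar p) (c : A) (d : HVar p) :
    (mulP p A (MvPolynomial.X xw) * Dop p A b) * (mulF p A c * Dop p A d)
      - (mulF p A c * Dop p A d) * (mulP p A (MvPolynomial.X xw) * Dop p A b)
    = if d = xw then -(mulF p A c * Dop p A b) else 0 := by
  rw [comm_helper (mulP p A (MvPolynomial.X xw)) (Dop p A b) (mulF p A c) (Dop p A d)
    (if d = xw then 1 else 0)
    (mulF_comm_mulP p A c _) (mulF_comm_Dop p A c b) (mulF_comm_Dop p A c d)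
    (Dop_comm p A b d) (Dop_mulP_X p A d xw) (by split_ifs <;> simp)]
  split_ifs
  · rfl
  · norm_num

end Aux2

theorem sub_comm_expand1 {R : Type*} [Ring R] (t1 t2 s : R) :
    (t1 - t2)*s - s*(t1 - t2) = (t1*s - s*t1) - (t2*s - s*t2) := by noncomm_ring

theorem sub_comm_expand2 {R : Type*} [Ring R] (t1 t2 s1 s2 : R) :
    (t1 - t2)*(s1 - s2) - (s1 - s2)*(t1 - t2)
      = ((t1*s1 - s1*t1) - (t1*s2 - s2*t1)) - ((t2*s1 - s1*t2) - (t2*s2 - s2*t2)) := by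
  noncomm_ring

theorem negpair {R : Type*} [Ring R] (a b : R) : -a - -b = -(a - b) := by abel

section EndAux
variable {M : Type*} [AddCommGroup M] [Module ℂ M]

theorem sceE1 (t1 t2 s : Module.End ℂ M) :
    (t1 - t2)*s - s*(t1 - t2) = (t1*s - s*t1) - (t2*s - s*t2) := sub_comm_expand1 t1 t2 s

theorem sceE2 (t1 t2 s1 s2 : Module.End ℂ M) :
    (t1 - t2)*(s1 - s2) - (s1 - s2)*(t1 - t2)
      = ((t1*s1 - s1*t1) - (t1*s2 - s2*t1)) - ((t2*s1 - s1*t2) - (t2*s2 - s2*t2)) :=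
  sub_comm_expand2 t1 t2 s1 s2

theorem sum_commutatorE {ι κ : Type*} [Fintype ι] [Fintype κ]
    (a : ι → Module.End ℂ M) (b : κ → Module.End ℂ M) :
    (∑ i, a i) * (∑ j, b j) - (∑ j, b j) * (∑ i, a i)
      = ∑ i, ∑ j, (a i * b j - b j * a i) := sum_commutator a b

theorem negpairE (a b : Module.End ℂ M) : -a - -b = -(a - b) := negpair a b

theorem sum_negE {ι : Type*} [Fintype ι] (g : ι → Module.End ℂ M) :
    ∑ i, -(g i) = -∑ i, g i := by
  exact Finset.sum_neg_distrib (s := Finset.univ) (f := g)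

end EndAux


theorem zszE {M : Type*} [AddCommGroup M] [Module ℂ M] :
    (0 : Module.End ℂ M) - 0 = 0 := sub_zero 0

theorem sum_subE {M : Type*} [AddCommGroup M] [Module ℂ M] {ι : Type*} [Fintype ι]
    (g h : ι → Module.End ℂ M) :
    ∑ i, (g i - h i) = ∑ i, g i - ∑ i, h i := Finset.sum_sub_distrib g h

theorem h3fix {R : Type*} [Ring R] (x y : R) : (0 - -x) - (-y - 0) = y + x := by abel

theorem h3fixE {M : Type*} [AddCommGroup M] [Module ℂ M] (x y : Module.End ℂ M) :
    (0 - -x) - (-y - 0) = y + x := h3fix x y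

theorem e1fix {R : Type*} [Ring R] (x y : R) : x = (-y + x) + y := by abel

theorem e1fixE {M : Type*} [AddCommGroup M] [Module ℂ M] (x y : Module.End ℂ M) :
    x = (-y + x) + y := e1fix x y

theorem e3fix {R : Type*} [Ring R] (x y : R) : x = (y + x) - y := by abel

theorem e3fixE {M : Type*} [AddCommGroup M] [Module ℂ M] (x y : Module.End ℂ M) :
    x = (y + x) - y := e3fix x y

/-- `[E, ∂_z] = -∂_z†^J`, `[E, ∂_z†] = 0`, `[E, ∂_z^J] = ∂_z†`, `[E, ∂_z†^J] = 0`;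
consequently `E` preserves q-monogenicity. -/
theorem E_dirac_commutators
    (f fd : Fin (2*p) → A)
    (hff : ∀ j k, f j * f k + f k * f j = 0)
    (hdd : ∀ j k, fd j * fd k + fd k * fd j = 0)
    (hfd : ∀ j k, f j * fd k + fd k * f j = if j = k then 1 else 0) :
    Eop p A * dz p A fd - dz p A fd * Eop p A = -(dzdJ p A fd) ∧
    Eop p A * dzd p A f - dzd p A f * Eop p A = 0 ∧
    Eop p A * dzJ p A f - dzJ p A f * Eop p A = dzd p A f ∧
    Eop p A * dzdJ p A fd - dzdJ p A fd * Eop p A = 0 ∧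
    (∀ F : HPol p ⊗[ℂ] A, dz p A fd F = 0 → dzd p A f F = 0 → dzJ p A f F = 0 →
      dzdJ p A fd F = 0 →
      dz p A fd (Eop p A F) = 0 ∧ dzd p A f (Eop p A F) = 0 ∧
      dzJ p A f (Eop p A F) = 0 ∧ dzdJ p A fd (Eop p A F) = 0) := by
  classical
  have h1 : Eop p A * dz p A fd - dz p A fd * Eop p A = -(dzdJ p A fd) := by
    unfold Eop dz dzdJ
    rw [sum_commutatorE]
    refine Eq.trans (Finset.sum_congr rfl fun j _ => ?_) (sum_negE _)
    simp only [sceE1, key, Sum.inl.injEq]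
    rw [sum_subE, Finset.sum_ite_eq', Finset.sum_ite_eq']
    simp only [Finset.mem_univ, if_true]
    exact negpairE _ _
  have h2 : Eop p A * dzd p A f - dzd p A f * Eop p A = 0 := by
    unfold Eop dzd
    rw [sum_commutatorE]
    refine Finset.sum_eq_zero fun j _ => Finset.sum_eq_zero fun k _ => ?_
    simp only [sceE1, key]
    simp [zszE]
  have h3 : Eop p A * dzJ p A f - dzJ p A f * Eop p A = dzd p A f := by
    unfold Eop dzJ dzd
    rw [sum_commutatorE, pair_sum (fun k => mulF p A (f k) * Dop p A (Sum.inr k))]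
    refine Finset.sum_congr rfl fun j _ => ?_
    rw [Fintype.sum_eq_single j (fun j' hj' => by
      simp only [sceE2, key, Sum.inl.injEq]
      simp [hj', zszE])]
    simp only [sceE2, key, Sum.inl.injEq]
    simp only [idx1_ne_idx0, idx0_ne_idx1, ite_false, ite_true, eq_self_iff_true, if_false,
      if_true, ite_eq_right_iff, reduceIte]
    exact h3fixE _ _
  have h4 : Eop p A * dzdJ p A fd - dzdJ p A fd * Eop p A = 0 := by
    unfold Eop dzdJ
    rw [sum_commutatorE]
    refine Finset.sum_eq_zero fun j _ => Finset.sum_eq_zero fun j' _ => ?_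
    simp only [sceE2, key]
    simp [zszE]
  refine ⟨h1, h2, h3, h4, fun F hz hzd hzJ hzdJ => ?_⟩
  have h1' : Eop p A * dz p A fd = -(dzdJ p A fd) + dz p A fd * Eop p A := by
    exact (sub_eq_iff_eq_add (G := Module.End ℂ (HPol p ⊗[ℂ] A))).mp h1
  have h2' : Eop p A * dzd p A f = dzd p A f * Eop p A := sub_eq_zero.mp h2
  have h3' : Eop p A * dzJ p A f = dzd p A f + dzJ p A f * Eop p A := by
    exact (sub_eq_iff_eq_add (G := Module.End ℂ (HPol p ⊗[ℂ] A))).mp h3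
  have h4' : Eop p A * dzdJ p A fd = dzdJ p A fd * Eop p A := sub_eq_zero.mp h4
  have e1 : dz p A fd * Eop p A = Eop p A * dz p A fd + dzdJ p A fd := by
    rw [h1']; exact e1fixE _ _
  have e3 : dzJ p A f * Eop p A = Eop p A * dzJ p A f - dzd p A f := by
    rw [h3']; exact e3fixE _ _
  refine ⟨?_, ?_, ?_, ?_⟩
  · rw [← Module.End.mul_apply, e1, LinearMap.add_apply, Module.End.mul_apply, hz, hzdJ,
      map_zero, add_zero]
  · rw [← Module.End.mul_apply, ← h2', Module.End.mul_apply, hzd, map_zero]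
  · rw [← Module.End.mul_apply, e3, LinearMap.sub_apply, Module.End.mul_apply, hzJ, hzd,
      map_zero, sub_zero]
  · rw [← Module.End.mul_apply, ← h4', Module.End.mul_apply, hzdJ, map_zero]
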